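/- Let α, γ, μ be reals with μ > 0, α ≥ γ + μ/√2, and let T_max = (α − γ) + √((α − γ)² − μ²/2). Then (1/2)·(μ²/T_max + 3·T_max + 2γ) ≤ 3α. -/
import Mathlib


/-- 3-competitiveness key algebraic step: with γ ≥ 0, μ > 0, α ≥ γ + μ/√2 and
T_max = (α − γ) + √((α − γ)² − μ²/2), we have (1/2)(μ²/T_max + 3T_max + 2γ) ≤ 3α. -/
theorem stmt_3 (α γ μ : ℝ) (hμ : μ > 0) (hγ : γ ≥ 0) (hα : α ≥ γ + μ / Real.sqrt 2)
    (Tmax : ℝ) (hT : Tmax = (α - γ) + Real.sqrt ((α - γ)^2 - μ^2/2)) :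
    (1/2) * (μ^2/Tmax + 3*Tmax + 2*γ) ≤ 3*α := by
  set b := α - γ with hb
  have h2 : (0:ℝ) < Real.sqrt 2 := by positivity
  have hbpos : 0 < b := by
    have : 0 < μ / Real.sqrt 2 := by positivity
    linarith [hα]
  have hble : μ / Real.sqrt 2 ≤ b := by linarith [hα]
  have hsq2 : (Real.sqrt 2)^2 = 2 := Real.sq_sqrt (by norm_num)
  have hbsq : μ^2/2 ≤ b^2 := by
    have := mul_self_le_mul_self (by positivity : (0:ℝ) ≤ μ / Real.sqrt 2) hble
    have h' : (μ / Real.sqrt 2)^2 = μ^2/2 := by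
      rw [div_pow, hsq2]
    nlinarith [this]
  set s := Real.sqrt (b^2 - μ^2/2) with hs
  have hsnn : 0 ≤ s := Real.sqrt_nonneg _
  have hs2 : s^2 = b^2 - μ^2/2 := Real.sq_sqrt (by linarith)
  have hsleb : s ≤ b := by
    nlinarith [hs2, hsnn]
  have hTpos : 0 < Tmax := by rw [hT]; positivity
  have hkey : μ^2 = 2*(b - s)*Tmax := by
    rw [hT]; nlinarith [hs2]
  have hdiv : μ^2 / Tmax = 2*(b - s) := by
    rw [hkey]; field_simp
  rw [hdiv, hT]
  nlinarith [hsleb, hγ]
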